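/- Let H be a Hilbert space and V : H → H a partial isometry (i.e., V is an isometry on (ker V)^⊥). If {e_j} is an orthonormal basis of H, then {V(e_j)} is a normalized tight frame for the closed range of V, i.e., Σ_j |⟨x, V e_j⟩|² = ||x||² for all x in the range of V. -/

import Mathlib

open scoped InnerProductSpace

/-- Parseval: `∑' i, ‖⟪y, e i⟫‖ ^ 2 = ‖y‖ ^ 2`. -/
lemma parseval_norm_sq {H : Type*} [NormedAddCommGroup H] [InnerProductSpace ℂ H]
    [CompleteSpace H] (e : HilbertBasis ℕ ℂ H) (y : H) :
    ∑' j, ‖⟪y, e j⟫_ℂ‖ ^ 2 = ‖y‖ ^ 2 := by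
  have h := e.tsum_inner_mul_inner y y
  have h1 : ∀ j, ⟪y, e j⟫_ℂ * ⟪e j, y⟫_ℂ = ((‖⟪y, e j⟫_ℂ‖ ^ 2 : ℝ) : ℂ) := by
    intro j
    rw [← inner_conj_symm y (e j), mul_comm, Complex.mul_conj', RCLike.norm_conj]
    push_cast
    ring
  simp_rw [h1] at h
  rw [← Complex.ofReal_tsum] at h
  have h2 : ⟪y, y⟫_ℂ = ((‖y‖ ^ 2 : ℝ) : ℂ) := by
    rw [inner_self_eq_norm_sq_to_K]; norm_cast
  rw [h2] at h
  exact_mod_cast h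

/-- If `V` is a partial isometry (isometric on `(ker V)ᗮ`) on a Hilbert space and `{e_j}` is an
orthonormal basis, then `{V e_j}` is a normalized tight frame for the range of `V`:
`Σ_j |⟨x, V e_j⟩|² = ‖x‖²` for all `x` in the range of `V`. -/
theorem stmt9 {H : Type*} [NormedAddCommGroup H] [InnerProductSpace ℂ H] [CompleteSpace H]
    (V : H →L[ℂ] H) (hV : ∀ x ∈ (LinearMap.ker (V : H →ₗ[ℂ] H))ᗮ, ‖V x‖ = ‖x‖)
    (e : HilbertBasis ℕ ℂ H) :
    ∀ x ∈ Set.range V, ∑' j, ‖⟪x, V (e j)⟫_ℂ‖ ^ 2 = ‖x‖ ^ 2 := by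
  rintro x ⟨y, rfl⟩
  set K : Submodule ℂ H := LinearMap.ker (V : H →ₗ[ℂ] H)
  -- inner product preserved on Kᗮ
  have hinner : ∀ a ∈ Kᗮ, ∀ b ∈ Kᗮ, ⟪V a, V b⟫_ℂ = ⟪a, b⟫_ℂ := by
    let f : Kᗮ →ₗᵢ[ℂ] H :=
      { toLinearMap := V.toLinearMap.comp Kᗮ.subtype
        norm_map' := fun a => hV a a.2 }
    intro a ha b hb
    exact f.inner_map_map ⟨a, ha⟩ ⟨b, hb⟩
  -- V* V q = q for q ∈ Kᗮ
  have hadj : ∀ q ∈ Kᗮ, (ContinuousLinearMap.adjoint V) (V q) = q := by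
    intro q hq
    apply ext_inner_right ℂ
    intro z
    obtain ⟨u, hu, v, hv, rfl⟩ := K.exists_add_mem_mem_orthogonal z
    have hVu : V u = 0 := hu
    rw [ContinuousLinearMap.adjoint_inner_left, map_add, hVu, zero_add, hinner q hq v hv,
      inner_add_right]
    have h0 : ⟪q, u⟫_ℂ = 0 := by rw [← inner_conj_symm, hq u hu, map_zero]
    rw [h0, zero_add]
  -- decompose y
  obtain ⟨u, hu, q, hq, rfl⟩ := K.exists_add_mem_mem_orthogonal y
  have hVu : V u = 0 := hu
  have hx : V (u + q) = V q := by rw [map_add, hVu, zero_add]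
  rw [hx]
  have key : ∀ j, ⟪V q, V (e j)⟫_ℂ = ⟪q, e j⟫_ℂ := by
    intro j
    rw [← ContinuousLinearMap.adjoint_inner_left, hadj q hq]
  simp_rw [key]
  rw [parseval_norm_sq e q, hV q hq]
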